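/- Assume W(L^∞,Y) is right translation invariant and also left translation invariant (each L_x acts boundedly on W(L^∞,Y)). Then for every well-spread family X=(x_i)_{i∈I}, the sequence space Y_d(X) is continuously embedded into the weighted space ℓ^∞_{1/r}, where r(i) := |||L_{x_i^{-1}} | W(L^∞,Y)||| is the operator quasi-norm of the left translation; that is, there is a constant C with sup_{i∈I} |λ_i| / r(i) ≤ C ‖(λ_i)|Y_d(X)‖ for all (λ_i)∈Y_d(X). -/

import Mathlib

open MeasureTheory Topology ENNReal NNReal Set Filter Pointwise

noncomputable section

namespace WienerAmalgam

variable {G : Type*} [Group G] [TopologicalSpace G] [IsTopologicalGroup G]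
  [LocallyCompactSpace G] [MeasurableSpace G] [BorelSpace G]

/-- Left translation `(L_x F)(y) = F (x⁻¹ y)`. -/
def Ltrans (x : G) (F : G → ℂ) : G → ℂ := fun y => F (x⁻¹ * y)

/-- Right translation `(R_x F)(y) = F (y x)`. -/
def Rtrans (x : G) (F : G → ℂ) : G → ℂ := fun y => F (y * x)

/-- `Q` is a relatively compact neighbourhood of the identity. -/
def IsRCNbhd (Q : Set G) : Prop := Q ∈ 𝓝 (1 : G) ∧ IsCompact (closure Q)

/-- A solid quasi-Banach function space on `G` (with respect to the measure `μ`),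
represented by its extended-real-valued quasi-norm functional `N`; membership of `F` in the
space is expressed by `N F < ⊤` (together with a.e.-measurability of `F`).  The quasi-norm is a
`p`-norm (`0 < p ≤ 1`), the space is solid, and it contains the characteristic function of every
compact set. -/
structure SolidQF (μ : Measure G) where
  N : (G → ℂ) → ℝ≥0∞
  p : ℝ
  p_pos : 0 < p
  p_le_one : p ≤ 1
  norm_smul : ∀ (c : ℂ) (F : G → ℂ), N (fun x => c * F x) = (‖c‖₊ : ℝ≥0∞) * N F
  ptriangle : ∀ F G' : G → ℂ, N (F + G') ^ p ≤ N F ^ p + N G' ^ p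
  solid : ∀ F G' : G → ℂ, AEMeasurable G' μ → (∀ᵐ x ∂μ, ‖G' x‖ ≤ ‖F x‖) → N G' ≤ N F
  definite : ∀ F : G → ℂ, AEMeasurable F μ → N F = 0 → F =ᵐ[μ] 0
  compact_finite : ∀ K : Set G, IsCompact K → N (K.indicator fun _ => 1) < ⊤

/-- Interpret a nonnegative extended-real-valued function as a complex-valued one. -/
def toC (f : G → ℝ≥0∞) : G → ℂ := fun x => ((f x).toReal : ℂ)

/-- The control function `K(F,Q,L^∞)(x) = ‖(L_x χ_Q) F‖_∞`. -/
def Kinf (μ : Measure G) (Q : Set G) (F : G → ℂ) : G → ℝ≥0∞ :=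
  fun x => eLpNorm ((x • Q).indicator F) ⊤ μ

/-- The control function `K(F,Q,L^1)(x) = ‖(L_x χ_Q) F‖_1`. -/
def Kone (μ : Measure G) (Q : Set G) (F : G → ℂ) : G → ℝ≥0∞ :=
  fun x => ∫⁻ z in x • Q, ‖F z‖₊ ∂μ

variable {μ : Measure G}

/-- The quasi-norm of the Wiener amalgam space `W(L^∞, Y, Q)`. -/
def WnormInf (Y : SolidQF μ) (Q : Set G) (F : G → ℂ) : ℝ≥0∞ := Y.N (toC (Kinf μ Q F))

/-- Membership in the Wiener amalgam space `W(L^∞, Y, Q)`. -/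
def MemWInf (Y : SolidQF μ) (Q : Set G) (F : G → ℂ) : Prop :=
  AEMeasurable F μ ∧ (∀ x, Kinf μ Q F x < ⊤) ∧ WnormInf Y Q F < ⊤

/-- The quasi-norm of the Wiener amalgam space `W(L^1, Y, Q)`. -/
def WnormOne (Y : SolidQF μ) (Q : Set G) (F : G → ℂ) : ℝ≥0∞ := Y.N (toC (Kone μ Q F))

/-- Membership in the Wiener amalgam space `W(L^1, Y, Q)`. -/
def MemWOne (Y : SolidQF μ) (Q : Set G) (F : G → ℂ) : Prop :=
  AEMeasurable F μ ∧ (∀ x, Kone μ Q F x < ⊤) ∧ WnormOne Y Q F < ⊤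

/-- The total variation measure `|c|` of a complex measure (up to an equivalent norm, realized
as `|Re c| + |Im c|`). -/
def cvar (c : ComplexMeasure G) : Measure G :=
  (ComplexMeasure.re c).totalVariation + (ComplexMeasure.im c).totalVariation

/-- The control function `K(c,Q,M)(x) = |c|(xQ)` of a complex measure. -/
def KM (Q : Set G) (c : ComplexMeasure G) : G → ℝ≥0∞ := fun x => cvar c (x • Q)

/-- The quasi-norm of the Wiener amalgam space `W(M, Y, Q)`. -/
def WnormM (Y : SolidQF μ) (Q : Set G) (c : ComplexMeasure G) : ℝ≥0∞ := Y.N (toC (KM Q c))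

/-- Membership in the Wiener amalgam space `W(M, Y, Q)`. -/
def MemWM (Y : SolidQF μ) (Q : Set G) (c : ComplexMeasure G) : Prop :=
  (∀ x, KM Q c x < ⊤) ∧ WnormM Y Q c < ⊤

/-- The right translation `A_x` of a complex measure, `A_x c (k) = c (R_x k)`,
i.e. `(A_x c)(E) = c (E x⁻¹)`. -/
def Atrans (x : G) (c : ComplexMeasure G) : ComplexMeasure G :=
  VectorMeasure.map c (fun z => z * x)

/-- The left translation `L_x` of a complex measure, `(L_x c)(E) = c (x⁻¹ E)`. -/
def Lmeas (x : G) (c : ComplexMeasure G) : ComplexMeasure G :=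
  VectorMeasure.map c (fun z => x * z)

/-- The integral of a function against a complex measure, via Jordan decompositions of the
real and imaginary parts. -/
def cint (c : ComplexMeasure G) (f : G → ℂ) : ℂ :=
  ((∫ y, f y ∂(ComplexMeasure.re c).toJordanDecomposition.posPart) -
      (∫ y, f y ∂(ComplexMeasure.re c).toJordanDecomposition.negPart)) +
    Complex.I * ((∫ y, f y ∂(ComplexMeasure.im c).toJordanDecomposition.posPart) -
      (∫ y, f y ∂(ComplexMeasure.im c).toJordanDecomposition.negPart))

/-- Convolution `c ∗ F` of a complex measure with a function,
`(c ∗ F)(z) = ∫ F(y⁻¹ z) dc(y)`. -/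
def convM (c : ComplexMeasure G) (F : G → ℂ) : G → ℂ := fun z => cint c (fun y => F (y⁻¹ * z))

/-- Convolution of two functions, `(F ∗ G)(z) = ∫ F(y) G(y⁻¹ z) dμ(y)`. -/
def fconv (μ : Measure G) (F G' : G → ℂ) : G → ℂ := fun z => ∫ y, F y * G' (y⁻¹ * z) ∂μ

section Sequence

variable {ι : Type*}

/-- A family of points of `G` is relatively separated if, for every compact `K`, the translates
`x_i K` have uniformly bounded overlaps. -/
def RelSeparated (X : ι → G) : Prop :=
  ∀ K : Set G, IsCompact K → ∃ C : ℕ, ∀ j : ι, {i : ι | (X i • K ∩ X j • K).Nonempty}.encard ≤ C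

/-- `X` is `V`-dense if the translates `x_i V` cover `G`. -/
def VDense (X : ι → G) (V : Set G) : Prop := ∀ g : G, ∃ i, g ∈ X i • V

/-- A well-spread family: relatively separated and `V`-dense for some relatively compact
neighbourhood `V` of the identity. -/
def WellSpread (X : ι → G) : Prop :=
  RelSeparated X ∧ ∃ V : Set G, IsRCNbhd V ∧ VDense X V

/-- The function `Σ_i |λ_i| χ_{x_i U}`. -/
def sumInd (X : ι → G) (U : Set G) (lam : ι → ℂ) : G → ℝ≥0∞ :=
  fun z => ∑' i, (X i • U).indicator (fun _ => (‖lam i‖₊ : ℝ≥0∞)) z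

/-- The quasi-norm of the sequence space `Y_d(X, U)`:
`‖(λ_i)‖ = ‖Σ_i |λ_i| χ_{x_i U}‖_Y`. -/
def YdNorm (Y : SolidQF μ) (X : ι → G) (U : Set G) (lam : ι → ℂ) : ℝ≥0∞ :=
  Y.N (toC (sumInd X U lam))

/-- A bounded uniform partition of unity of size `U` associated with the well-spread family
`X`. -/
structure IsBUPU (ψ : ι → G → ℝ) (X : ι → G) (U : Set G) : Prop where
  cont : ∀ i, Continuous (ψ i)
  nonneg : ∀ i x, 0 ≤ ψ i x
  le_one : ∀ i x, ψ i x ≤ 1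
  sum_one : ∀ x : G, ∑' i, ψ i x = 1
  support_subset : ∀ i, Function.support (ψ i) ⊆ X i • U
  wellspread : WellSpread X

end Sequence

/-- The operator quasi-norm of a map `T` with respect to the quasi-norm functional `N`. -/
def opEN {α : Type*} (T : α → α) (N : α → ℝ≥0∞) : ℝ≥0∞ :=
  sInf {C : ℝ≥0∞ | ∀ a, N (T a) ≤ C * N a}

/-- `W(L^∞, Y)` is right translation invariant: every right translation acts boundedly on
`W(L^∞, Y, Q)` for every relatively compact neighbourhood `Q` of the identity. -/
def WInfRTI (Y : SolidQF μ) : Prop :=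
  ∀ Q : Set G, IsRCNbhd Q → ∀ y : G, ∃ C : ℝ≥0∞, C ≠ ⊤ ∧
    ∀ F : G → ℂ, WnormInf Y Q (Rtrans y F) ≤ C * WnormInf Y Q F

/-- `W(L^∞, Y)` is left translation invariant. -/
def WInfLTI (Y : SolidQF μ) : Prop :=
  ∀ Q : Set G, IsRCNbhd Q → ∀ y : G, ∃ C : ℝ≥0∞, C ≠ ⊤ ∧
    ∀ F : G → ℂ, WnormInf Y Q (Ltrans y F) ≤ C * WnormInf Y Q F

/-- The quasi-norm of the Wiener amalgam space `W(L^∞, L^p_w, Q)` with weighted Lebesgue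
global component:  `‖ K(F,Q,L^∞) · w ‖_p`. -/
def WnormInfLpw (μ : Measure G) (Q : Set G) (w : G → ℝ≥0∞) (p : ℝ) (F : G → ℂ) : ℝ≥0∞ :=
  (∫⁻ x, (Kinf μ Q F x * w x) ^ p ∂μ) ^ (1 / p)

/-- Membership in `W(L^∞, L^p_w, Q)`. -/
def MemWInfLpw (μ : Measure G) (Q : Set G) (w : G → ℝ≥0∞) (p : ℝ) (F : G → ℂ) : Prop :=
  AEMeasurable F μ ∧ (∀ x, Kinf μ Q F x < ⊤) ∧ WnormInfLpw μ Q w p F < ⊤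



/-! ### Auxiliary material for Statement 7 -/

section Aux7

set_option linter.unusedSectionVars false

variable {G : Type*} [Group G] [TopologicalSpace G] [IsTopologicalGroup G]
  [LocallyCompactSpace G] [MeasurableSpace G] [BorelSpace G]
  {μ : Measure G} [μ.IsHaarMeasure]

/-- The set of essential points of `A`: points all of whose neighbourhoods meet `A` in a
non-null set. -/
def essPts (μ : Measure G) (A : Set G) : Set G := {q | ∀ N ∈ 𝓝 q, μ (A ∩ N) ≠ 0}

lemma essPts_subset_closure {A : Set G} : essPts μ A ⊆ closure A := by
  intro q hq
  rw [mem_closure_iff]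
  intro O hO hqO
  by_contra hne
  rw [Set.not_nonempty_iff_eq_empty] at hne
  exact hq O (hO.mem_nhds hqO) (by rw [Set.inter_comm] at hne; simp [hne])

lemma one_mem_essPts {A : Set G} (hA : A ∈ 𝓝 (1 : G)) : (1 : G) ∈ essPts μ A := by
  intro N hN h0
  have hsub : interior A ∩ interior N ⊆ A ∩ N :=
    Set.inter_subset_inter interior_subset interior_subset
  have hpos : 0 < μ (interior A ∩ interior N) :=
    (isOpen_interior.inter isOpen_interior).measure_pos μ
      ⟨1, mem_interior_iff_mem_nhds.2 hA, mem_interior_iff_mem_nhds.2 hN⟩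
  exact absurd (le_antisymm (le_of_le_of_eq (measure_mono hsub) h0) (zero_le)) hpos.ne'

lemma closure_subset_essPts {T : Set G} (hT : IsOpen T) : closure T ⊆ essPts μ T := by
  intro q hq N hN h0
  have h1 : q ∈ interior N := mem_interior_iff_mem_nhds.2 hN
  obtain ⟨w, hw1, hw2⟩ := mem_closure_iff.1 hq (interior N) isOpen_interior h1
  have hpos : 0 < μ (T ∩ interior N) :=
    (hT.inter isOpen_interior).measure_pos μ ⟨w, hw2, hw1⟩
  have : μ (T ∩ interior N) ≤ μ (T ∩ N) :=
    measure_mono (Set.inter_subset_inter_right _ interior_subset)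
  exact absurd (le_antisymm (this.trans h0.le) (zero_le)) hpos.ne'

lemma measure_smul_set' (z : G) (s : Set G) : μ (z • s) = μ s := by
  have : z • s = (fun w => z⁻¹ * w) ⁻¹' s := by
    ext w
    simp [Set.mem_smul_set_iff_inv_smul_mem, smul_eq_mul]
  rw [this, measure_preimage_mul]

/-- A relatively compact set which is locally null is null. -/
lemma null_of_locally_null (A : Set G) (hA : IsCompact (closure A))
    (h : ∀ q ∈ A, ∃ N, IsOpen N ∧ q ∈ N ∧ μ (A ∩ N) = 0) : μ A = 0 := by
  classical
  let ν : Measure G := Measure.haar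
  have key : ∀ s : Set G, IsCompact (closure s) → μ s = 0 → ν s = 0 := by
    intro s hs h0
    have h2 : ν s = Measure.haarScalarFactor ν μ • μ s :=
      Measure.measure_isMulInvariant_eq_smul_of_isCompact_closure ν μ hs
    rw [h2, h0, smul_zero]
  have key' : ∀ s : Set G, IsCompact (closure s) → ν s = 0 → μ s = 0 := by
    intro s hs h0
    have h2 : μ s = Measure.haarScalarFactor μ ν • ν s :=
      Measure.measure_isMulInvariant_eq_smul_of_isCompact_closure μ ν hs
    rw [h2, h0, smul_zero]
  choose! N hNopen hNmem hNnull using h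
  have hAfin : ν A ≠ ⊤ := by
    refine ne_of_lt (lt_of_le_of_lt (measure_mono subset_closure) hA.measure_lt_top)
  have hνnull : ∀ q ∈ A, ν (A ∩ N q) = 0 := by
    intro q hq
    exact key _ (hA.closure_of_subset (Set.inter_subset_left.trans subset_closure)) (hNnull q hq)
  set H := toMeasurable ν A with hH
  have hHnull : ∀ q ∈ A, ν (H ∩ N q) = 0 := by
    intro q hq
    rw [Measure.measure_toMeasurable_inter (hNopen q hq).measurableSet hAfin]
    exact hνnull q hq
  set S := ⋃ q ∈ A, N q with hS
  have hSopen : IsOpen S := isOpen_biUnion fun q hq => hNopen q hq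
  have hAS : A ⊆ H ∩ S := fun q hq =>
    ⟨subset_toMeasurable ν A hq, Set.mem_biUnion hq (hNmem q hq)⟩
  have hfin : ν (H ∩ S) ≠ ⊤ := by
    refine ne_of_lt (lt_of_le_of_lt (measure_mono Set.inter_subset_left) ?_)
    rw [hH, measure_toMeasurable]
    exact hAfin.lt_top
  have hmeas : MeasurableSet (H ∩ S) :=
    (measurableSet_toMeasurable ν A).inter hSopen.measurableSet
  have hHS : ν (H ∩ S) = 0 := by
    rw [hmeas.measure_eq_iSup_isCompact_of_ne_top hfin]
    refine le_antisymm (iSup₂_le fun K hK => iSup_le fun hKc => ?_) (zero_le)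
    have hKS : K ⊆ ⋃ q ∈ A, N q := hK.trans Set.inter_subset_right
    rw [Set.biUnion_eq_iUnion] at hKS
    obtain ⟨t, ht⟩ := hKc.elim_finite_subcover (fun q : A => N q)
      (fun q => hNopen q q.2) hKS
    have hK' : K ⊆ ⋃ q ∈ t, (H ∩ N q) := by
      intro w hw
      obtain ⟨q, hq, hwq⟩ := Set.mem_iUnion₂.1 (ht hw)
      exact Set.mem_biUnion hq ⟨(hK hw).1, hwq⟩
    calc ν K ≤ ν (⋃ q ∈ t, (H ∩ N q)) := measure_mono hK'
    _ ≤ ∑ q ∈ t, ν (H ∩ N q) := measure_biUnion_finset_le t _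
    _ = 0 := Finset.sum_eq_zero fun q _ => hHnull q q.2
  exact key' A hA (le_antisymm ((measure_mono hAS).trans hHS.le) (zero_le))

/-- Pointwise upper bound on the local maximal function. -/
lemma kinf_le_of_forall_le {Q : Set G} {F : G → ℂ} {z : G} {s : ℝ≥0∞}
    (h : ∀ q ∈ Q, (‖F (z * q)‖₊ : ℝ≥0∞) ≤ s) : Kinf μ Q F z ≤ s := by
  rw [Kinf, eLpNorm_exponent_top, eLpNormEssSup]
  refine essSup_le_of_ae_le s (Filter.Eventually.of_forall fun w => ?_)
  show (‖(z • Q).indicator F w‖₊ : ℝ≥0∞) ≤ s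
  by_cases hw : w ∈ z • Q
  · rw [Set.indicator_of_mem hw]
    rw [Set.mem_smul_set] at hw
    obtain ⟨q, hq, hzq⟩ := hw
    have : z • q = z * q := rfl
    rw [← hzq, this]
    exact h q hq
  · simp [Set.indicator_of_notMem hw]

/-- Lower bound at an essential point of the window, for continuous functions. -/
lemma le_kinf {Q : Set G} {F : G → ℂ} (hF : Continuous F) {q : G}
    (hq : q ∈ essPts μ Q) (z : G) : (‖F (z * q)‖₊ : ℝ≥0∞) ≤ Kinf μ Q F z := by
  rw [Kinf, eLpNorm_exponent_top, eLpNormEssSup]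
  by_contra hlt
  push_neg at hlt
  obtain ⟨t, ht1, ht2⟩ := exists_between hlt
  set O : Set G := {w | t < (‖F w‖₊ : ℝ≥0∞)} with hO
  have hOopen : IsOpen O :=
    isOpen_lt continuous_const (ENNReal.continuous_coe.comp (continuous_nnnorm.comp hF))
  have hmemO : z * q ∈ O := ht2
  have hnhds : (fun w => z * w) ⁻¹' O ∈ 𝓝 q := by
    have : ContinuousAt (fun w => z * w) q := (continuous_mul_left z).continuousAt
    exact this.preimage_mem_nhds (hOopen.mem_nhds hmemO)
  have hne := hq _ hnhds
  have hae : ∀ᵐ w ∂μ, ((z • Q).indicator F w) = (z • Q).indicator F w ∧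
      (‖(z • Q).indicator F w‖₊ : ℝ≥0∞) ≤ t := by
    filter_upwards [ae_le_essSup (μ := μ) (fun w => (‖(z • Q).indicator F w‖₊ : ℝ≥0∞))]
      with w hw
    exact ⟨rfl, hw.trans ht1.le⟩
  have hbad : z • (Q ∩ (fun w => z * w) ⁻¹' O) ⊆
      {w | ¬ ((‖(z • Q).indicator F w‖₊ : ℝ≥0∞) ≤ t)} := by
    intro w hw
    rw [Set.mem_smul_set] at hw
    obtain ⟨u, ⟨huQ, huO⟩, rfl⟩ := hw
    have hmem : z • u ∈ z • Q := Set.smul_mem_smul_set huQ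
    rw [Set.mem_setOf_eq, Set.indicator_of_mem hmem, not_le]
    exact huO
  have hnull : μ {w | ¬ ((‖(z • Q).indicator F w‖₊ : ℝ≥0∞) ≤ t)} = 0 := by
    have := hae.mono fun w hw => hw.2
    simpa [ae_iff] using this
  have : μ (z • (Q ∩ (fun w => z * w) ⁻¹' O)) = 0 :=
    le_antisymm ((measure_mono hbad).trans hnull.le) (zero_le)
  rw [measure_smul_set'] at this
  exact hne this

/-- The local maximal function of a continuous function w.r.t. a relatively compact window
is given by the supremum over the essential points of the window. -/
lemma kinf_le_kSup {Q : Set G} (hQc : IsCompact (closure Q)) {F : G → ℂ}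
    (hF : Continuous F) (z : G) :
    Kinf μ Q F z ≤ ⨆ q ∈ essPts μ Q, (‖F (z * q)‖₊ : ℝ≥0∞) := by
  set s := ⨆ q ∈ essPts μ Q, (‖F (z * q)‖₊ : ℝ≥0∞) with hs
  set D : Set G := {q | s < (‖F (z * q)‖₊ : ℝ≥0∞)} with hD
  have hDopen : IsOpen D := by
    refine isOpen_lt continuous_const ?_
    exact ENNReal.continuous_coe.comp
      (continuous_nnnorm.comp (hF.comp (continuous_mul_left z)))
  have hnull : μ (Q ∩ D) = 0 := by
    refine null_of_locally_null _ (hQc.closure_of_subset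
      (Set.inter_subset_left.trans subset_closure)) ?_
    rintro q ⟨hqQ, hqD⟩
    have hqe : q ∉ essPts μ Q := by
      intro hqe
      have : (‖F (z * q)‖₊ : ℝ≥0∞) ≤ s :=
        le_biSup (fun q => (‖F (z * q)‖₊ : ℝ≥0∞)) hqe
      exact absurd hqD (not_lt.2 this)
    rw [essPts, Set.mem_setOf_eq] at hqe
    push_neg at hqe
    obtain ⟨N, hN, hN0⟩ := hqe
    refine ⟨interior N, isOpen_interior, mem_interior_iff_mem_nhds.2 hN, ?_⟩
    have : (Q ∩ D) ∩ interior N ⊆ Q ∩ N :=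
      Set.inter_subset_inter Set.inter_subset_left interior_subset
    exact le_antisymm ((measure_mono this).trans hN0.le) (zero_le)
  have hznull : μ (z • (Q ∩ D)) = 0 := by rw [measure_smul_set']; exact hnull
  rw [Kinf, eLpNorm_exponent_top, eLpNormEssSup]
  refine essSup_le_of_ae_le s ?_
  have hcompl : ∀ᵐ w ∂μ, w ∉ z • (Q ∩ D) := by
    rw [ae_iff]
    simpa using hznull
  filter_upwards [hcompl] with w hw
  show (‖(z • Q).indicator F w‖₊ : ℝ≥0∞) ≤ s
  by_cases hwQ : w ∈ z • Q
  · rw [Set.indicator_of_mem hwQ]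
    rw [Set.mem_smul_set] at hwQ
    obtain ⟨u, huQ, rfl⟩ := hwQ
    by_contra hgt
    push_neg at hgt
    exact hw (Set.smul_mem_smul_set ⟨huQ, hgt⟩)
  · simp [Set.indicator_of_notMem hwQ]

lemma kinf_eq {Q : Set G} (hQc : IsCompact (closure Q)) {F : G → ℂ}
    (hF : Continuous F) (z : G) :
    Kinf μ Q F z = ⨆ q ∈ essPts μ Q, (‖F (z * q)‖₊ : ℝ≥0∞) :=
  le_antisymm (kinf_le_kSup hQc hF z) (iSup₂_le fun _ hq => le_kinf hF hq z)

lemma measurable_kSup (E : Set G) {F : G → ℂ} (hF : Continuous F) :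
    Measurable fun z => ⨆ q ∈ E, (‖F (z * q)‖₊ : ℝ≥0∞) := by
  refine LowerSemicontinuous.measurable ?_
  intro z t ht
  rw [gt_iff_lt, lt_iSup_iff] at ht
  obtain ⟨q, hq⟩ := ht
  rw [lt_iSup_iff] at hq
  obtain ⟨hqE, hq⟩ := hq
  have hO : IsOpen {z' : G | t < (‖F (z' * q)‖₊ : ℝ≥0∞)} :=
    isOpen_lt continuous_const (ENNReal.continuous_coe.comp
      (continuous_nnnorm.comp (hF.comp (continuous_mul_right q))))
  filter_upwards [hO.mem_nhds hq] with z' hz'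
  exact lt_of_lt_of_le hz' (le_biSup (fun q => (‖F (z' * q)‖₊ : ℝ≥0∞)) hqE)

lemma aemeasurable_toC_kinf {Q : Set G} (hQc : IsCompact (closure Q)) {F : G → ℂ}
    (hF : Continuous F) : AEMeasurable (toC (Kinf μ Q F)) μ := by
  have heq : toC (Kinf μ Q F) = fun z =>
      (((⨆ q ∈ essPts μ Q, (‖F (z * q)‖₊ : ℝ≥0∞)).toReal : ℝ) : ℂ) := by
    funext z
    show ((Kinf μ Q F z).toReal : ℂ) = _
    rw [kinf_eq hQc hF z]
  rw [heq]
  exact (Complex.measurable_ofReal.comp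
    (ENNReal.measurable_toReal.comp (measurable_kSup (essPts μ Q) hF))).aemeasurable

lemma N_zero (Y : SolidQF μ) : Y.N (fun _ => 0) = 0 := by
  have h := Y.norm_smul 0 (fun _ => 0)
  simpa using h

lemma N_sum_le (Y : SolidQF μ) {κ : Type*} [DecidableEq κ] (g : κ → G → ℂ) (s : Finset κ) :
    Y.N (fun z => ∑ k ∈ s, g k z) ^ Y.p ≤ ∑ k ∈ s, Y.N (g k) ^ Y.p := by
  induction s using Finset.induction with
  | empty =>
      simp only [Finset.sum_empty]
      rw [N_zero Y, ENNReal.zero_rpow_of_pos Y.p_pos]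
  | @insert a s ha ih =>
      have hfun : (fun z => ∑ k ∈ insert a s, g k z) = g a + fun z => ∑ k ∈ s, g k z := by
        funext z
        simp [Finset.sum_insert ha]
      rw [hfun, Finset.sum_insert ha]
      exact (Y.ptriangle _ _).trans (add_le_add le_rfl ih)

end Aux7

/-- Assume `W(L^∞,Y)` is right and left translation invariant.  Then for
every well-spread family `X = (x_i)`, the sequence space `Y_d(X)` embeds continuously into
`ℓ^∞_{1/r}` with `r(i) = |||L_{x_i⁻¹} | W(L^∞,Y)|||`: there is a constant `C` with
`|λ_i| ≤ C · r(i) · ‖(λ_i)|Y_d(X)‖` for all `i` and all `(λ_i) ∈ Y_d(X)`. -/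
theorem Yd_embeds_linfty_weighted
    {G : Type*} [Group G] [TopologicalSpace G] [IsTopologicalGroup G]
    [LocallyCompactSpace G] [MeasurableSpace G] [BorelSpace G]
    {μ : Measure G} [μ.IsHaarMeasure] (Y : SolidQF μ)
    (hRTI : WInfRTI Y) (hLTI : WInfLTI Y)
    {ι : Type*} (X : ι → G) (hX : WellSpread X)
    (U : Set G) (hU : IsRCNbhd U) (Q : Set G) (hQ : IsRCNbhd Q) :
    ∃ C : ℝ≥0∞, C ≠ ⊤ ∧ ∀ (lam : ι → ℂ) (i : ι),
      (‖lam i‖₊ : ℝ≥0∞) ≤ C * opEN (Ltrans (X i)⁻¹) (WnormInf Y Q) * YdNorm Y X U lam := by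
  classical
  obtain ⟨hQmem, hQc⟩ := hQ
  obtain ⟨hUmem, hUc⟩ := hU
  obtain ⟨hRel, -⟩ := hX
  -- the open kernel of `U`
  have hVopen : IsOpen (interior U) := isOpen_interior
  have hV1 : (1 : G) ∈ interior U := mem_interior_iff_mem_nhds.2 hUmem
  set V : Set G := interior U with hVdef
  -- a small symmetric relatively compact neighbourhood `T` with `closure T * (closure T)⁻¹ ⊆ V`
  obtain ⟨S₂, hS₂o, hS₂1, hS₂⟩ := exists_open_nhds_one_mul_subset (hVopen.mem_nhds hV1)
  obtain ⟨S₃, hS₃o, hS₃1, hS₃⟩ := exists_open_nhds_one_mul_subset (hS₂o.mem_nhds hS₂1)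
  obtain ⟨Kc, hKcc, hKc1⟩ := exists_compact_mem_nhds (1 : G)
  set S₄ : Set G := S₃ ∩ S₃⁻¹ with hS₄def
  have hS₄o : IsOpen S₄ := hS₃o.inter hS₃o.inv
  have hS₄1 : (1 : G) ∈ S₄ := ⟨hS₃1, by simpa using hS₃1⟩
  have hS₄symm : S₄⁻¹ = S₄ := by
    rw [hS₄def, Set.inter_inv, inv_inv, Set.inter_comm]
  set T : Set G := S₄ ∩ interior Kc with hTdef
  have hTo : IsOpen T := hS₄o.inter isOpen_interior
  have hT1 : (1 : G) ∈ T := ⟨hS₄1, mem_interior_iff_mem_nhds.2 hKc1⟩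
  have hTc : IsCompact (closure T) :=
    hKcc.closure_of_subset (Set.inter_subset_right.trans interior_subset)
  have hTrc : IsRCNbhd T := ⟨hTo.mem_nhds hT1, hTc⟩
  have hclT : closure T ⊆ S₄ * S₄ := by
    intro z hz
    have hmem : z ∈ z • S₄ :=
      Set.mem_smul_set.2 ⟨1, hS₄1, by rw [smul_eq_mul, mul_one]⟩
    obtain ⟨a, haO, haT⟩ := mem_closure_iff.1 hz (z • S₄) (hS₄o.smul z) hmem
    rw [Set.mem_smul_set] at haO
    obtain ⟨u, huS, hzu⟩ := haO
    have haS : a ∈ S₄ := haT.1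
    have huS' : u⁻¹ ∈ S₄ := by rw [← hS₄symm]; exact Set.inv_mem_inv.2 huS
    have hzeq : z = a * u⁻¹ := by
      have h1 : z * u = a := hzu
      rw [← h1, mul_inv_cancel_right]
    rw [hzeq]
    exact Set.mul_mem_mul haS huS'
  have hS₄sub : S₄ ⊆ S₃ := Set.inter_subset_left
  have hS₄4 : S₄ * S₄ * (S₄ * S₄)⁻¹ ⊆ V := by
    have h1 : S₄ * S₄ ⊆ S₂ := (Set.mul_subset_mul hS₄sub hS₄sub).trans hS₃
    have h2 : (S₄ * S₄)⁻¹ = S₄ * S₄ := by rw [mul_inv_rev, hS₄symm]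
    rw [h2]
    exact (Set.mul_subset_mul h1 h1).trans hS₂
  have hTV : closure T * (closure T)⁻¹ ⊆ V :=
    (Set.mul_subset_mul hclT (Set.inv_subset_inv.2 hclT)).trans hS₄4
  -- a Urysohn function supported in `T`
  obtain ⟨Φ₀, hΦone, hΦzero, hΦcsupp, hΦ01⟩ :=
    exists_continuous_one_zero_of_isCompact (isCompact_singleton : IsCompact ({1} : Set G))
      hTo.isClosed_compl (Set.disjoint_singleton_left.2 fun h => h hT1)
  set Φ : G → ℂ := fun z => (Φ₀ z : ℂ) with hΦdef
  have hΦcont : Continuous Φ := Complex.continuous_ofReal.comp Φ₀.continuous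
  have hΦT : ∀ z, Φ z ≠ 0 → z ∈ T := by
    intro z hz
    by_contra hzT
    have h0 : Φ₀ z = 0 := hΦzero hzT
    exact hz (by rw [hΦdef]; simp [h0])
  have hΦnorm : ∀ z, (‖Φ z‖₊ : ℝ≥0∞) ≤ 1 := by
    intro z
    have hle : ‖Φ z‖ ≤ 1 := by
      rw [hΦdef]
      simp only [Complex.norm_real]
      rw [Real.norm_eq_abs, abs_of_nonneg (hΦ01 z).1]
      exact (hΦ01 z).2
    have hplus : ‖Φ z‖₊ ≤ 1 := by
      rw [← NNReal.coe_le_coe, coe_nnnorm]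
      simpa using hle
    exact_mod_cast hplus
  have hΦ1v : Φ 1 = 1 := by
    have h1 : Φ₀ 1 = 1 := hΦone rfl
    rw [hΦdef]; simp [h1]
  -- essential points of the window `Q`
  have hess1 : (1 : G) ∈ essPts μ Q := one_mem_essPts hQmem
  have hessQ : essPts μ Q ⊆ closure Q := essPts_subset_closure
  have htoCnorm : ∀ (g : G → ℝ≥0∞) (z : G), ‖toC g z‖ = (g z).toReal := by
    intro g z
    show ‖(((g z).toReal : ℝ) : ℂ)‖ = _
    rw [Complex.norm_real, Real.norm_eq_abs]
    exact abs_of_nonneg ENNReal.toReal_nonneg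
  -- the constant `c₀`
  set c₀ : ℝ≥0∞ := WnormInf Y Q Φ with hc₀def
  have hKΦle1 : ∀ z, Kinf μ Q Φ z ≤ 1 := fun z =>
    kinf_le_of_forall_le fun q _ => hΦnorm _
  have hYNΦ_le : Y.N Φ ≤ c₀ := by
    refine Y.solid (toC (Kinf μ Q Φ)) Φ hΦcont.aemeasurable
      (Filter.Eventually.of_forall fun z => ?_)
    rw [htoCnorm]
    have h1 : (‖Φ z‖₊ : ℝ≥0∞) ≤ Kinf μ Q Φ z := by
      have h2 := le_kinf (μ := μ) hΦcont hess1 z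
      simpa using h2
    have h2 := ENNReal.toReal_mono (ne_top_of_le_ne_top ENNReal.one_ne_top (hKΦle1 z)) h1
    simpa using h2
  have hYNΦ_pos : Y.N Φ ≠ 0 := by
    intro h0
    have hae := Y.definite Φ hΦcont.aemeasurable h0
    have hO : IsOpen {z : G | Φ z ≠ 0} := isOpen_compl_singleton.preimage hΦcont
    have hpos : 0 < μ {z : G | Φ z ≠ 0} := hO.measure_pos μ ⟨1, by simp [hΦ1v]⟩
    have hzero : μ {z : G | Φ z ≠ 0} = 0 := by
      simpa using ae_iff.1 hae
    exact hpos.ne' hzero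
  have hc₀0 : c₀ ≠ 0 := fun h => hYNΦ_pos (le_antisymm (h ▸ hYNΦ_le) (zero_le))
  -- finiteness of the `W`-norms of left translates of `Φ`
  set K₀ : Set G := closure T * (closure Q)⁻¹ with hK₀def
  have hK₀c : IsCompact K₀ := hTc.mul hQc.inv
  have hLcont : ∀ x : G, Continuous (Ltrans x Φ) := fun x =>
    hΦcont.comp (continuous_mul_left x⁻¹)
  have hLnorm : ∀ (x : G) (z : G), (‖Ltrans x Φ z‖₊ : ℝ≥0∞) ≤ 1 := fun x z => hΦnorm _
  have hsuppK : ∀ (x : G) (z : G), z ∉ x • K₀ → Kinf μ Q (Ltrans x Φ) z = 0 := by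
    intro x z hz
    rw [kinf_eq hQc (hLcont x) z]
    refine le_antisymm (iSup₂_le fun q hq => ?_) (zero_le)
    simp only [le_zero_iff, ENNReal.coe_eq_zero, nnnorm_eq_zero]
    by_contra hne
    have hT' : x⁻¹ * (z * q) ∈ T := hΦT _ hne
    refine hz (Set.mem_smul_set.2 ⟨(x⁻¹ * (z * q)) * q⁻¹, ?_, ?_⟩)
    · exact Set.mul_mem_mul (subset_closure hT') (Set.inv_mem_inv.2 (hessQ hq))
    · show x • ((x⁻¹ * (z * q)) * q⁻¹) = z
      rw [smul_eq_mul, mul_assoc, mul_inv_cancel_right, mul_inv_cancel_left]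
  have hWfin : ∀ x : G, WnormInf Y Q (Ltrans x Φ) ≤
      Y.N ((x • K₀).indicator fun _ => (1 : ℂ)) := by
    intro x
    refine Y.solid _ _ (aemeasurable_toC_kinf hQc (hLcont x))
      (Filter.Eventually.of_forall fun z => ?_)
    rw [htoCnorm]
    by_cases hz : z ∈ x • K₀
    · rw [Set.indicator_of_mem hz]
      have hle1 : Kinf μ Q (Ltrans x Φ) z ≤ 1 :=
        kinf_le_of_forall_le fun q _ => hLnorm x _
      have h2 := ENNReal.toReal_mono ENNReal.one_ne_top hle1
      simpa using h2
    · rw [Set.indicator_of_notMem hz, hsuppK x z hz]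
      simp
  have hINDK₀ : ∀ x : G, Y.N ((x • K₀).indicator fun _ => (1 : ℂ)) ≠ ⊤ := by
    intro x
    have hc : IsCompact (x • K₀) := by
      rw [← Set.image_smul]
      exact hK₀c.image (continuous_const_smul x)
    exact (Y.compact_finite _ hc).ne
  have hΛid : Ltrans (1 : G) Φ = Φ := by
    funext z
    show Φ ((1 : G)⁻¹ * z) = Φ z
    rw [inv_one, one_mul]
  have hc₀top : c₀ ≠ ⊤ := by
    have h := hWfin 1
    rw [hΛid] at h
    exact ne_top_of_le_ne_top (hINDK₀ 1) h
  -- finite cover of `closure Q` by right translates of `T`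
  have hcov : closure Q ⊆ ⋃ y : G, T * {y} := by
    intro q _
    refine Set.mem_iUnion.2 ⟨q, ?_⟩
    rw [Set.mem_mul]
    exact ⟨1, hT1, q, rfl, one_mul q⟩
  obtain ⟨tF, htF⟩ := hQc.elim_finite_subcover (fun y : G => T * {y})
    (fun _ => hTo.mul_right) hcov
  -- the right-translation constants for the window `T`
  choose Crt hCrtne hCrt using fun y : G => hRTI T hTrc y
  set B : ℝ≥0∞ := (∑ y ∈ tF, Crt y ^ Y.p) ^ (1 / Y.p) with hBdef
  have hBne : B ≠ ⊤ := by
    refine (ENNReal.rpow_lt_top_of_nonneg ((one_div_pos.2 Y.p_pos).le) ?_).ne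
    exact (ENNReal.sum_lt_top.2 fun y _ =>
      ENNReal.rpow_lt_top_of_nonneg Y.p_pos.le (hCrtne y)).ne
  refine ⟨c₀⁻¹ * B, ENNReal.mul_ne_top (ENNReal.inv_ne_top.2 hc₀0) hBne, ?_⟩
  intro lam i
  set x : G := X i with hxdef
  set Φi : G → ℂ := Ltrans x Φ with hΦidef
  have hΦicont : Continuous Φi := hLcont x
  have hΦinorm : ∀ z, (‖Φi z‖₊ : ℝ≥0∞) ≤ 1 := fun z => hΦnorm _
  set w : ℝ≥0∞ := WnormInf Y Q Φi with hwdef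
  have hwtop : w ≠ ⊤ := ne_top_of_le_ne_top (hINDK₀ x) (hWfin x)
  have hLinv : Ltrans x⁻¹ Φi = Φ := by
    funext z
    show Φ (x⁻¹ * (x⁻¹⁻¹ * z)) = Φ z
    rw [inv_inv, inv_mul_cancel_left]
  obtain ⟨C₀, hC₀ne, hC₀⟩ := hLTI Q ⟨hQmem, hQc⟩ x⁻¹
  have hw0 : w ≠ 0 := by
    intro h0
    have h1 := hC₀ Φi
    rw [hLinv] at h1
    rw [hwdef] at h0
    rw [h0, mul_zero] at h1
    exact hc₀0 (le_antisymm h1 (zero_le))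
  set r : ℝ≥0∞ := opEN (Ltrans x⁻¹) (WnormInf Y Q) with hrdef
  -- Step I: `c₀ ≤ r * w`
  have hrw : c₀ ≤ r * w := by
    have hdiv : c₀ / w ≤ r := by
      rw [hrdef]
      refine le_sInf fun b hb => ?_
      rw [Set.mem_setOf_eq] at hb
      rw [ENNReal.div_le_iff_le_mul (Or.inl hw0) (Or.inl hwtop)]
      have h1 := hb Φi
      rwa [hLinv] at h1
    rwa [ENNReal.div_le_iff_le_mul (Or.inl hw0) (Or.inl hwtop)] at hdiv
  -- Step II: `w ≤ B * ν` where `ν = Y.N (χ_{x V})`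
  set ν : ℝ≥0∞ := Y.N ((x • V).indicator fun _ => (1 : ℂ)) with hνdef
  have hWT : WnormInf Y T Φi ≤ ν := by
    refine Y.solid _ _ (aemeasurable_toC_kinf hTc hΦicont)
      (Filter.Eventually.of_forall fun z => ?_)
    rw [htoCnorm]
    by_cases hz : z ∈ x • V
    · rw [Set.indicator_of_mem hz]
      have hle1 : Kinf μ T Φi z ≤ 1 := kinf_le_of_forall_le fun q _ => hΦinorm _
      have h2 := ENNReal.toReal_mono ENNReal.one_ne_top hle1
      simpa using h2
    · have h0 : Kinf μ T Φi z = 0 := by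
        refine le_antisymm (kinf_le_of_forall_le fun q hq => ?_) (zero_le)
        simp only [le_zero_iff, ENNReal.coe_eq_zero, nnnorm_eq_zero]
        by_contra hne
        have hT' : x⁻¹ * (z * q) ∈ T := hΦT _ hne
        have hmem : x⁻¹ * z ∈ V := by
          have heq : (x⁻¹ * (z * q)) * q⁻¹ = x⁻¹ * z := by
            rw [mul_assoc, mul_inv_cancel_right]
          rw [← heq]
          exact hTV (Set.mul_mem_mul (subset_closure hT')
            (Set.inv_mem_inv.2 (subset_closure hq)))
        exact hz (Set.mem_smul_set.2 ⟨x⁻¹ * z, hmem, by rw [smul_eq_mul, mul_inv_cancel_left]⟩)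
      rw [Set.indicator_of_notMem hz, h0]
      simp
  have hcover : ∀ z, Kinf μ Q Φi z ≤ ∑ y ∈ tF, Kinf μ T (Rtrans y Φi) z := by
    intro z
    rw [kinf_eq hQc hΦicont z]
    refine iSup₂_le fun q hq => ?_
    obtain ⟨y, hy, hqy⟩ := Set.mem_iUnion₂.1 (htF (hessQ hq))
    rw [Set.mem_mul] at hqy
    obtain ⟨v, hv, y', hy', hvy⟩ := hqy
    rw [Set.mem_singleton_iff] at hy'
    rw [hy'] at hvy
    have hcontR : Continuous (Rtrans y Φi) := hΦicont.comp (continuous_mul_right y)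
    have hve : v ∈ essPts μ T := closure_subset_essPts hTo (subset_closure hv)
    have hterm : (‖Φi (z * q)‖₊ : ℝ≥0∞) ≤ Kinf μ T (Rtrans y Φi) z := by
      have h1 := le_kinf (μ := μ) hcontR hve z
      have h2 : Rtrans y Φi (z * v) = Φi (z * q) := by
        show Φi ((z * v) * y) = Φi (z * q)
        rw [mul_assoc, hvy]
      rwa [h2] at h1
    exact hterm.trans (Finset.single_le_sum (f := fun y => Kinf μ T (Rtrans y Φi) z)
      (fun _ _ => zero_le) hy)
  have hRle1 : ∀ (z : G), ∀ y ∈ tF, Kinf μ T (Rtrans y Φi) z ≤ 1 := fun z y _ =>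
    kinf_le_of_forall_le fun q _ => hΦnorm _
  have hw_le_sum : w ≤ Y.N (fun z => ∑ y ∈ tF, toC (Kinf μ T (Rtrans y Φi)) z) := by
    refine Y.solid _ _ (aemeasurable_toC_kinf hQc hΦicont)
      (Filter.Eventually.of_forall fun z => ?_)
    rw [htoCnorm]
    have hRHS : (∑ y ∈ tF, toC (Kinf μ T (Rtrans y Φi)) z) =
        ((∑ y ∈ tF, (Kinf μ T (Rtrans y Φi) z).toReal : ℝ) : ℂ) := by
      rw [Complex.ofReal_sum]
      rfl
    rw [hRHS, Complex.norm_real, Real.norm_eq_abs,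
      abs_of_nonneg (Finset.sum_nonneg fun y _ => ENNReal.toReal_nonneg)]
    have hfin : ∀ y ∈ tF, Kinf μ T (Rtrans y Φi) z ≠ ⊤ := fun y hy =>
      ne_top_of_le_ne_top ENNReal.one_ne_top (hRle1 z y hy)
    rw [← ENNReal.toReal_sum hfin]
    refine ENNReal.toReal_mono ?_ (hcover z)
    exact (ENNReal.sum_lt_top.2 fun y hy => (hfin y hy).lt_top).ne
  have hNp : Y.N (fun z => ∑ y ∈ tF, toC (Kinf μ T (Rtrans y Φi)) z) ^ Y.p ≤
      ∑ y ∈ tF, (Crt y * WnormInf Y T Φi) ^ Y.p := by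
    refine (N_sum_le Y _ tF).trans ?_
    exact Finset.sum_le_sum fun y _ => ENNReal.rpow_le_rpow (hCrt y Φi) Y.p_pos.le
  have hwB : w ≤ B * ν := by
    have h1 : w ^ Y.p ≤ (∑ y ∈ tF, Crt y ^ Y.p) * ν ^ Y.p := by
      calc w ^ Y.p ≤ Y.N (fun z => ∑ y ∈ tF, toC (Kinf μ T (Rtrans y Φi)) z) ^ Y.p :=
            ENNReal.rpow_le_rpow hw_le_sum Y.p_pos.le
        _ ≤ ∑ y ∈ tF, (Crt y * WnormInf Y T Φi) ^ Y.p := hNp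
        _ ≤ ∑ y ∈ tF, (Crt y * ν) ^ Y.p := Finset.sum_le_sum fun y _ =>
            ENNReal.rpow_le_rpow (mul_le_mul_right hWT _) Y.p_pos.le
        _ = ∑ y ∈ tF, Crt y ^ Y.p * ν ^ Y.p := Finset.sum_congr rfl fun y _ =>
            ENNReal.mul_rpow_of_nonneg _ _ Y.p_pos.le
        _ = (∑ y ∈ tF, Crt y ^ Y.p) * ν ^ Y.p := (Finset.sum_mul _ _ _).symm
    have h2 := ENNReal.rpow_le_rpow h1 ((one_div_pos.2 Y.p_pos).le)
    have hww : (w ^ Y.p) ^ (1 / Y.p) = w := by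
      rw [← ENNReal.rpow_mul, mul_one_div_cancel Y.p_pos.ne', ENNReal.rpow_one]
    have hνν : (ν ^ Y.p) ^ (1 / Y.p) = ν := by
      rw [← ENNReal.rpow_mul, mul_one_div_cancel Y.p_pos.ne', ENNReal.rpow_one]
    rwa [hww, ENNReal.mul_rpow_of_nonneg _ _ ((one_div_pos.2 Y.p_pos).le), hνν] at h2
  -- Step A: `‖lam i‖ * ν ≤ YdNorm`
  have hsumfin : ∀ z, sumInd X U lam z ≠ ⊤ := by
    intro z
    by_cases hz : ∃ j, z ∈ X j • U
    · obtain ⟨j₀, hj₀⟩ := hz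
      obtain ⟨n, hn⟩ := hRel (closure U) hUc
      have hsub : {j | z ∈ X j • U} ⊆
          {j | (X j • closure U ∩ X j₀ • closure U).Nonempty} := by
        intro j hj
        exact ⟨z, Set.smul_set_mono subset_closure hj, Set.smul_set_mono subset_closure hj₀⟩
      have hfin : {j | z ∈ X j • U}.Finite := by
        rw [← Set.encard_lt_top_iff]
        exact lt_of_le_of_lt ((Set.encard_mono hsub).trans (hn j₀)) (WithTop.coe_lt_top n)
      rw [sumInd, tsum_eq_sum (s := hfin.toFinset) ?_]
      · refine (ENNReal.sum_lt_top.2 fun j _ => ?_).ne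
        by_cases hjz : z ∈ X j • U
        · rw [Set.indicator_of_mem hjz]; exact ENNReal.coe_lt_top
        · rw [Set.indicator_of_notMem hjz]
          exact lt_of_le_of_lt (zero_le (a := (‖lam j‖₊ : ℝ≥0∞))) ENNReal.coe_lt_top
      · intro j hj
        rw [Set.Finite.mem_toFinset, Set.mem_setOf_eq] at hj
        exact Set.indicator_of_notMem hj _
    · push_neg at hz
      rw [sumInd]
      have hzero : ∀ j, (X j • U).indicator (fun _ => (‖lam j‖₊ : ℝ≥0∞)) z = 0 :=
        fun j => Set.indicator_of_notMem (hz j) _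
      rw [tsum_congr hzero, tsum_zero]
      exact ENNReal.zero_ne_top
  have hstepA : (‖lam i‖₊ : ℝ≥0∞) * ν ≤ YdNorm Y X U lam := by
    have hG'eq : (fun z => lam i * ((x • V).indicator (fun _ => (1 : ℂ)) z)) =
        (x • V).indicator (fun _ => lam i) := by
      funext z
      by_cases hz : z ∈ x • V <;> simp [hz]
    have hmeas : AEMeasurable (fun z => lam i * ((x • V).indicator (fun _ => (1 : ℂ)) z)) μ := by
      rw [hG'eq]
      exact (measurable_const.indicator ((hVopen.smul x).measurableSet)).aemeasurable
    have hsolid : Y.N (fun z => lam i * ((x • V).indicator (fun _ => (1 : ℂ)) z)) ≤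
        Y.N (toC (sumInd X U lam)) := by
      refine Y.solid _ _ hmeas (Filter.Eventually.of_forall fun z => ?_)
      rw [htoCnorm]
      by_cases hz : z ∈ x • V
      · rw [Set.indicator_of_mem hz, mul_one]
        have hzU : z ∈ x • U := Set.smul_set_mono interior_subset hz
        have hterm : (‖lam i‖₊ : ℝ≥0∞) ≤ sumInd X U lam z := by
          have h1 := ENNReal.le_tsum
            (f := fun j => (X j • U).indicator (fun _ => (‖lam j‖₊ : ℝ≥0∞)) z) i
          rwa [Set.indicator_of_mem hzU] at h1
        have h2 := ENNReal.toReal_mono (hsumfin z) hterm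
        simpa using h2
      · rw [Set.indicator_of_notMem hz, mul_zero]
        simp [ENNReal.toReal_nonneg]
    calc (‖lam i‖₊ : ℝ≥0∞) * ν
        = Y.N (fun z => lam i * ((x • V).indicator (fun _ => (1 : ℂ)) z)) :=
          (Y.norm_smul (lam i) _).symm
      _ ≤ YdNorm Y X U lam := hsolid
  -- assemble
  calc (‖lam i‖₊ : ℝ≥0∞) = ((‖lam i‖₊ : ℝ≥0∞) * c₀) * c₀⁻¹ := by
        rw [mul_assoc, ENNReal.mul_inv_cancel hc₀0 hc₀top, mul_one]
    _ ≤ (r * B * YdNorm Y X U lam) * c₀⁻¹ := by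
        refine mul_le_mul_left ?_ _
        calc (‖lam i‖₊ : ℝ≥0∞) * c₀ ≤ (‖lam i‖₊ : ℝ≥0∞) * (r * w) := mul_le_mul_right hrw _
          _ ≤ (‖lam i‖₊ : ℝ≥0∞) * (r * (B * ν)) :=
              mul_le_mul_right (mul_le_mul_right hwB _) _
          _ = r * B * ((‖lam i‖₊ : ℝ≥0∞) * ν) := by ring
          _ ≤ r * B * YdNorm Y X U lam := mul_le_mul_right hstepA _
    _ = c₀⁻¹ * B * r * YdNorm Y X U lam := by ring
end WienerAmalgam
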